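/- Linear convergence of randomized Kaczmarz in Bregman distance for f(x) = (1/2)‖x‖₂²: let A ∈ ℝ^{m×n} be nonzero with rows A(1),…,A(m), and Ax = b consistent with minimum-norm solution x̂. Starting from x⁽⁰⁾ ∈ R(Aᵀ), the update x⁽ᵏ⁺¹⁾ = x⁽ᵏ⁾ + (b_{i(k)} − A(i(k))x⁽ᵏ⁾)/‖A(i(k))‖₂² · A(i(k))ᵀ with i(k) chosen independently with Pr(i(k)=j) = ‖A(j)‖₂²/‖A‖_F² satisfies E‖x⁽ᵏ⁾ − x̂‖₂² ≤ (1 − σ_min(A)²/‖A‖_F²)ᵏ ‖x⁽⁰⁾ − x̂‖₂². -/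

import Mathlib

open RealInnerProductSpace

/-- The set of nonzero singular values of the matrix whose rows are `A i`:
`s > 0` such that `s²` is an eigenvalue of `AᵀA`, i.e. of `v ↦ ∑ i ⟪A i, v⟫ • A i`. -/
def nonzeroSingularValues {m n : ℕ} (A : Fin m → EuclideanSpace ℝ (Fin n)) : Set ℝ :=
  {s : ℝ | 0 < s ∧ ∃ v : EuclideanSpace ℝ (Fin n), v ≠ 0 ∧
    (∑ i, ⟪A i, v⟫ • A i) = s ^ 2 • v}

/-- One Kaczmarz step using row `j`: `x ↦ x + (b_j − ⟪A_j, x⟫)/‖A_j‖² · A_jᵀ`. -/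
noncomputable def kacStep {m n : ℕ} (A : Fin m → EuclideanSpace ℝ (Fin n))
    (b : Fin m → ℝ) (j : Fin m) (x : EuclideanSpace ℝ (Fin n)) :
    EuclideanSpace ℝ (Fin n) :=
  x + ((b j - ⟪A j, x⟫) / ‖A j‖ ^ 2) • A j

/-- The Kaczmarz iterate after `k` steps along the index path `w`. -/
noncomputable def kacRun {m n : ℕ} (A : Fin m → EuclideanSpace ℝ (Fin n))
    (b : Fin m → ℝ) (x0 : EuclideanSpace ℝ (Fin n)) {k : ℕ} (w : Fin k → Fin m) :
    EuclideanSpace ℝ (Fin n) :=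
  List.foldl (fun x j => kacStep A b j x) x0 (List.ofFn w)

noncomputable def kacT {m n : ℕ} (A : Fin m → EuclideanSpace ℝ (Fin n)) :
    EuclideanSpace ℝ (Fin n) →ₗ[ℝ] EuclideanSpace ℝ (Fin n) where
  toFun v := ∑ i, ⟪A i, v⟫ • A i
  map_add' x y := by simp [inner_add_right, add_smul, Finset.sum_add_distrib]
  map_smul' c x := by simp [inner_smul_right, smul_smul, Finset.smul_sum]

lemma kacT_apply {m n : ℕ} (A : Fin m → EuclideanSpace ℝ (Fin n)) (v) :
    kacT A v = ∑ i, ⟪A i, v⟫ • A i := rfl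

lemma kacT_symm {m n : ℕ} (A : Fin m → EuclideanSpace ℝ (Fin n)) :
    (kacT A).IsSymmetric := by
  intro x y
  simp only [kacT_apply, sum_inner, inner_sum, real_inner_smul_left, real_inner_smul_right]
  refine Finset.sum_congr rfl fun i _ => ?_
  rw [real_inner_comm (A i) x]
  ring

lemma kacT_inner {m n : ℕ} (A : Fin m → EuclideanSpace ℝ (Fin n))
    (w : EuclideanSpace ℝ (Fin n)) :
    ⟪kacT A w, w⟫ = ∑ j, ⟪A j, w⟫ ^ 2 := by
  simp only [kacT_apply, sum_inner, real_inner_smul_left, sq]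

lemma spectral_bound {m n : ℕ} (A : Fin m → EuclideanSpace ℝ (Fin n))
    (σmin : ℝ)
    (hσ : σmin ∈ nonzeroSingularValues A ∧ ∀ s ∈ nonzeroSingularValues A, σmin ≤ s)
    (w : EuclideanSpace ℝ (Fin n)) (hw : w ∈ Submodule.span ℝ (Set.range A)) :
    σmin ^ 2 * ‖w‖ ^ 2 ≤ ∑ j, ⟪A j, w⟫ ^ 2 := by
  have hT := kacT_symm A
  set B := hT.eigenvectorBasis (finrank_euclideanSpace_fin (𝕜 := ℝ) (n := n)) with hB
  set μ := hT.eigenvalues (finrank_euclideanSpace_fin (𝕜 := ℝ) (n := n)) with hμ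
  have heig : ∀ i, kacT A (B i) = μ i • B i := fun i =>
    hT.apply_eigenvectorBasis _ i
  have hμval : ∀ i, μ i = ∑ j, ⟪A j, B i⟫ ^ 2 := by
    intro i
    have h1 : ⟪kacT A (B i), B i⟫ = μ i := by
      rw [heig, real_inner_smul_left, real_inner_self_eq_norm_sq, B.orthonormal.1 i]
      simp
    rw [← h1, kacT_inner]
  have hμnonneg : ∀ i, 0 ≤ μ i := fun i => by
    rw [hμval]; positivity
  -- expand norms
  have hnorm : ‖w‖ ^ 2 = ∑ i, ⟪w, B i⟫ ^ 2 := by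
    rw [← real_inner_self_eq_norm_sq, ← B.sum_inner_mul_inner w w]
    refine Finset.sum_congr rfl fun i _ => ?_
    rw [real_inner_comm (B i) w, sq]
  have hquad : ∑ j, ⟪A j, w⟫ ^ 2 = ∑ i, μ i * ⟪w, B i⟫ ^ 2 := by
    rw [← kacT_inner, ← B.sum_inner_mul_inner (kacT A w) w]
    refine Finset.sum_congr rfl fun i _ => ?_
    rw [hT w (B i), heig i, real_inner_smul_right, real_inner_comm (B i) w]
    ring
  rw [hnorm, hquad, Finset.mul_sum]
  refine Finset.sum_le_sum fun i _ => ?_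
  rcases eq_or_ne (⟪w, B i⟫ : ℝ) 0 with hc | hc
  · simp [hc]
  · have hμpos : 0 < μ i := by
      rcases (hμnonneg i).lt_or_eq with h | h
      · exact h
      · exfalso
        have hz : ∀ j, ⟪A j, B i⟫ = 0 := by
          intro j
          have h0 : ∑ j, ⟪A j, B i⟫ ^ 2 = 0 := by rw [← hμval, ← h]
          have := (Finset.sum_eq_zero_iff_of_nonneg
            (fun j _ => sq_nonneg (⟪A j, B i⟫ : ℝ))).1 h0 j (Finset.mem_univ j)
          exact pow_eq_zero_iff (two_ne_zero) |>.1 this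
        have hperp : ∀ x ∈ Submodule.span ℝ (Set.range A), ⟪x, B i⟫ = 0 := by
          intro x hx
          induction hx using Submodule.span_induction with
          | mem y hy => obtain ⟨j, rfl⟩ := hy; exact hz j
          | zero => simp
          | add y z _ _ hy hz2 => rw [inner_add_left, hy, hz2]; ring
          | smul c y _ hy => rw [real_inner_smul_left, hy]; ring
        exact hc (hperp w hw)
    have hs : Real.sqrt (μ i) ∈ nonzeroSingularValues A := by
      refine ⟨Real.sqrt_pos.2 hμpos, B i, ?_, ?_⟩
      · intro h0
        have := B.orthonormal.1 i
        rw [h0] at this; simp at this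
      · rw [← kacT_apply, heig i, Real.sq_sqrt (hμnonneg i)]
    have h1 : σmin ≤ Real.sqrt (μ i) := hσ.2 _ hs
    have h2 : σmin ^ 2 ≤ μ i := by
      nlinarith [Real.sq_sqrt (hμnonneg i), hσ.1.1, h1]
    exact mul_le_mul_of_nonneg_right h2 (sq_nonneg _)

lemma sigma_sq_le_frob {m n : ℕ} (A : Fin m → EuclideanSpace ℝ (Fin n))
    (σmin : ℝ) (h : σmin ∈ nonzeroSingularValues A) :
    σmin ^ 2 ≤ ∑ j, ‖A j‖ ^ 2 := by
  obtain ⟨hpos, v, hv, heq⟩ := h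
  have h1 : σmin ^ 2 * ‖v‖ ^ 2 = ∑ j, ⟪A j, v⟫ ^ 2 := by
    rw [← kacT_inner, kacT_apply, heq, real_inner_smul_left,
      real_inner_self_eq_norm_sq]
  have h2 : ∑ j, ⟪A j, v⟫ ^ 2 ≤ (∑ j, ‖A j‖ ^ 2) * ‖v‖ ^ 2 := by
    rw [Finset.sum_mul]
    refine Finset.sum_le_sum fun j _ => ?_
    have := abs_real_inner_le_norm (A j) v
    nlinarith [abs_nonneg (⟪A j, v⟫ : ℝ), sq_abs (⟪A j, v⟫ : ℝ)]
  have hv2 : 0 < ‖v‖ ^ 2 := by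
    have : 0 < ‖v‖ := norm_pos_iff.2 hv
    positivity
  nlinarith
  
lemma xhat_mem_span {m n : ℕ} (A : Fin m → EuclideanSpace ℝ (Fin n))
    (b : Fin m → ℝ) (xhat : EuclideanSpace ℝ (Fin n))
    (hxhat : (∀ i, ⟪A i, xhat⟫ = b i) ∧
      ∀ x, (∀ i, ⟪A i, x⟫ = b i) → ‖xhat‖ ≤ ‖x‖) :
    xhat ∈ Submodule.span ℝ (Set.range A) := by
  set S := Submodule.span ℝ (Set.range A) with hS
  set p : EuclideanSpace ℝ (Fin n) := (Submodule.orthogonalProjectionOnto S xhat : EuclideanSpace ℝ (Fin n)) with hp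
  have hmemS : p ∈ S := (Submodule.orthogonalProjectionOnto S xhat).2
  have hortho : xhat - p ∈ Sᗮ := by
    rw [hp, Submodule.coe_orthogonalProjectionOnto_apply]
    exact Submodule.sub_starProjection_mem_orthogonal xhat
  have hsol : ∀ i, ⟪A i, p⟫ = b i := by
    intro i
    have hAi : A i ∈ S := Submodule.subset_span ⟨i, rfl⟩
    have h0 : ⟪A i, xhat - p⟫ = 0 := hortho (A i) hAi
    rw [inner_sub_right] at h0
    have := hxhat.1 i
    linarith
  have hle : ‖xhat‖ ≤ ‖p‖ := hxhat.2 p hsol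
  have hpyth : ‖xhat‖ ^ 2 = ‖p‖ ^ 2 + ‖xhat - p‖ ^ 2 := by
    have h0 : ⟪p, xhat - p⟫ = 0 := hortho p hmemS
    have hadd : p + (xhat - p) = xhat := by abel
    have h2 := norm_add_sq_real p (xhat - p)
    rw [hadd, h0] at h2
    linarith
  have : ‖xhat - p‖ ^ 2 ≤ 0 := by
    nlinarith [norm_nonneg xhat, norm_nonneg p]
  have hz : xhat - p = 0 := by
    have : ‖xhat - p‖ = 0 := by nlinarith [norm_nonneg (xhat - p)]
    exact norm_eq_zero.1 this
  have : xhat = p := by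
    have := sub_eq_zero.1 hz; exact this
  rw [this]; exact hmemS

lemma kacStep_mem_span {m n : ℕ} (A : Fin m → EuclideanSpace ℝ (Fin n))
    (b : Fin m → ℝ) (j : Fin m) (x : EuclideanSpace ℝ (Fin n))
    (hx : x ∈ Submodule.span ℝ (Set.range A)) :
    kacStep A b j x ∈ Submodule.span ℝ (Set.range A) := by
  exact Submodule.add_mem _ hx
    (Submodule.smul_mem _ _ (Submodule.subset_span ⟨j, rfl⟩))

lemma step_sum {m n : ℕ} (A : Fin m → EuclideanSpace ℝ (Fin n))
    (b : Fin m → ℝ) (xhat : EuclideanSpace ℝ (Fin n))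
    (hb : ∀ i, ⟪A i, xhat⟫ = b i) (x : EuclideanSpace ℝ (Fin n))
    (hF : (0:ℝ) < ∑ j, ‖A j‖ ^ 2) :
    ∑ j, (‖A j‖ ^ 2 / ∑ j', ‖A j'‖ ^ 2) * ‖kacStep A b j x - xhat‖ ^ 2
      = ‖x - xhat‖ ^ 2 - (∑ j, ⟪A j, x - xhat⟫ ^ 2) / ∑ j', ‖A j'‖ ^ 2 := by
  have key : ∀ j, (‖A j‖ ^ 2 / ∑ j', ‖A j'‖ ^ 2) * ‖kacStep A b j x - xhat‖ ^ 2
      = (‖A j‖ ^ 2 * ‖x - xhat‖ ^ 2 - ⟪A j, x - xhat⟫ ^ 2) / ∑ j', ‖A j'‖ ^ 2 := by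
    intro j
    rcases eq_or_ne (A j) 0 with hj | hj
    · simp [kacStep, hj]
    · have hAj : (‖A j‖ : ℝ) ^ 2 ≠ 0 := by
        simpa using (norm_ne_zero_iff.2 hj)
      have hstep : kacStep A b j x - xhat
          = (x - xhat) + ((- ⟪A j, x - xhat⟫) / ‖A j‖ ^ 2) • A j := by
        have : b j - ⟪A j, x⟫ = - ⟪A j, x - xhat⟫ := by
          rw [inner_sub_right, ← hb j]; ring
        rw [kacStep, this]; abel
      rw [hstep, norm_add_sq_real, real_inner_smul_right, norm_smul]
      rw [real_inner_comm (x - xhat) (A j)]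
      rw [mul_pow, norm_div, Real.norm_eq_abs, Real.norm_eq_abs, abs_pow, sq_abs,
        div_pow, sq_abs]
      field_simp
      ring
  calc ∑ j, (‖A j‖ ^ 2 / ∑ j', ‖A j'‖ ^ 2) * ‖kacStep A b j x - xhat‖ ^ 2
      = ∑ j, (‖A j‖ ^ 2 * ‖x - xhat‖ ^ 2 - ⟪A j, x - xhat⟫ ^ 2) / ∑ j', ‖A j'‖ ^ 2 :=
        Finset.sum_congr rfl fun j _ => key j
    _ = ((∑ j, ‖A j‖ ^ 2) * ‖x - xhat‖ ^ 2 - ∑ j, ⟪A j, x - xhat⟫ ^ 2) / ∑ j', ‖A j'‖ ^ 2 := by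
        rw [← Finset.sum_div, Finset.sum_sub_distrib, ← Finset.sum_mul]
    _ = ‖x - xhat‖ ^ 2 - (∑ j, ⟪A j, x - xhat⟫ ^ 2) / ∑ j', ‖A j'‖ ^ 2 := by
        field_simp

lemma kacRun_cons {m n k : ℕ} (A : Fin m → EuclideanSpace ℝ (Fin n))
    (b : Fin m → ℝ) (x0 : EuclideanSpace ℝ (Fin n)) (j : Fin m) (t : Fin k → Fin m) :
    kacRun A b x0 (Fin.cons j t) = kacRun A b (kacStep A b j x0) t := by
  simp [kacRun, List.ofFn_succ]

lemma kac_main {m n : ℕ} (A : Fin m → EuclideanSpace ℝ (Fin n)) (b : Fin m → ℝ)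
    (xhat : EuclideanSpace ℝ (Fin n))
    (hb : ∀ i, ⟪A i, xhat⟫ = b i)
    (hxs : xhat ∈ Submodule.span ℝ (Set.range A))
    (σmin : ℝ)
    (hσ : σmin ∈ nonzeroSingularValues A ∧
      ∀ s ∈ nonzeroSingularValues A, σmin ≤ s) :
    ∀ k : ℕ, ∀ x0 ∈ Submodule.span ℝ (Set.range A),
      ∑ w : Fin k → Fin m,
        (∏ i, ‖A (w i)‖ ^ 2 / (∑ j, ‖A j‖ ^ 2)) * ‖kacRun A b x0 w - xhat‖ ^ 2
      ≤ (1 - σmin ^ 2 / (∑ j, ‖A j‖ ^ 2)) ^ k * ‖x0 - xhat‖ ^ 2 := by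
  have hσF := sigma_sq_le_frob A σmin hσ.1
  have hσpos : 0 < σmin := hσ.1.1
  have hF : (0:ℝ) < ∑ j, ‖A j‖ ^ 2 := lt_of_lt_of_le (by positivity) hσF
  set F : ℝ := ∑ j, ‖A j‖ ^ 2 with hFdef
  have hρ0 : 0 ≤ 1 - σmin ^ 2 / F := by
    rw [sub_nonneg, div_le_one hF]
    exact hσF
  intro k
  induction k with
  | zero =>
    intro x0 hx0
    simp [kacRun]
  | succ k ih =>
    intro x0 hx0
    have hsplit :
        ∑ w : Fin (k+1) → Fin m,
          (∏ i, ‖A (w i)‖ ^ 2 / F) * ‖kacRun A b x0 w - xhat‖ ^ 2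
        = ∑ j : Fin m, (‖A j‖ ^ 2 / F) *
            ∑ t : Fin k → Fin m,
              (∏ i, ‖A (t i)‖ ^ 2 / F) * ‖kacRun A b (kacStep A b j x0) t - xhat‖ ^ 2 := by
      rw [← Equiv.sum_comp (Fin.consEquiv fun _ : Fin (k+1) => Fin m)]
      rw [Fintype.sum_prod_type]
      refine Finset.sum_congr rfl fun j _ => ?_
      rw [Finset.mul_sum]
      refine Finset.sum_congr rfl fun t _ => ?_
      have h1 : (Fin.consEquiv fun _ : Fin (k+1) => Fin m) (j, t) = Fin.cons j t := by
        ext i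
        refine Fin.cases ?_ ?_ i <;> simp [Fin.consEquiv]
      rw [h1, kacRun_cons, Fin.prod_univ_succ]
      simp only [Fin.cons_zero, Fin.cons_succ]
      ring
    rw [hsplit]
    have hstep1 : ∀ j : Fin m,
        (‖A j‖ ^ 2 / F) *
            ∑ t : Fin k → Fin m,
              (∏ i, ‖A (t i)‖ ^ 2 / F) * ‖kacRun A b (kacStep A b j x0) t - xhat‖ ^ 2
        ≤ (‖A j‖ ^ 2 / F) * ((1 - σmin ^ 2 / F) ^ k * ‖kacStep A b j x0 - xhat‖ ^ 2) := by
      intro j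
      refine mul_le_mul_of_nonneg_left ?_ (by positivity)
      exact ih (kacStep A b j x0) (kacStep_mem_span A b j x0 hx0)
    calc ∑ j : Fin m, (‖A j‖ ^ 2 / F) *
            ∑ t : Fin k → Fin m,
              (∏ i, ‖A (t i)‖ ^ 2 / F) * ‖kacRun A b (kacStep A b j x0) t - xhat‖ ^ 2
        ≤ ∑ j : Fin m, (‖A j‖ ^ 2 / F) *
            ((1 - σmin ^ 2 / F) ^ k * ‖kacStep A b j x0 - xhat‖ ^ 2) :=
          Finset.sum_le_sum fun j _ => hstep1 j
      _ = (1 - σmin ^ 2 / F) ^ k *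
            ∑ j : Fin m, (‖A j‖ ^ 2 / F) * ‖kacStep A b j x0 - xhat‖ ^ 2 := by
          rw [Finset.mul_sum]
          exact Finset.sum_congr rfl fun j _ => by ring
      _ = (1 - σmin ^ 2 / F) ^ k *
            (‖x0 - xhat‖ ^ 2 - (∑ j, ⟪A j, x0 - xhat⟫ ^ 2) / F) := by
          rw [step_sum A b xhat hb x0 hF]
      _ ≤ (1 - σmin ^ 2 / F) ^ k * ((1 - σmin ^ 2 / F) * ‖x0 - xhat‖ ^ 2) := by
          refine mul_le_mul_of_nonneg_left ?_ (by positivity)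
          have hsb := spectral_bound A σmin hσ (x0 - xhat)
            (Submodule.sub_mem _ hx0 hxs)
          rw [sub_mul, one_mul]
          have h2 : σmin ^ 2 * ‖x0 - xhat‖ ^ 2 / F ≤ (∑ j, ⟪A j, x0 - xhat⟫ ^ 2) / F := by
            gcongr
          have h3 : σmin ^ 2 / F * ‖x0 - xhat‖ ^ 2 = σmin ^ 2 * ‖x0 - xhat‖ ^ 2 / F := by
            ring
          linarith
      _ = (1 - σmin ^ 2 / F) ^ (k+1) * ‖x0 - xhat‖ ^ 2 := by ring

/-- Linear convergence in expectation of the randomized Kaczmarz method for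
`f(x) = ½‖x‖²`: the expectation at step `k`, taken over random i.i.d. row indices
drawn with probabilities `‖A(j)‖²/‖A‖_F²`, is written as a sum over all index
paths `w : Fin k → Fin m` weighted by their probabilities. -/
theorem randomized_kaczmarz_linear_convergence {m n : ℕ}
    (A : Fin m → EuclideanSpace ℝ (Fin n)) (hA : A ≠ 0) (b : Fin m → ℝ)
    (hcons : ∃ x, ∀ i, ⟪A i, x⟫ = b i)
    (xhat : EuclideanSpace ℝ (Fin n))
    (hxhat : (∀ i, ⟪A i, xhat⟫ = b i) ∧
      ∀ x, (∀ i, ⟪A i, x⟫ = b i) → ‖xhat‖ ≤ ‖x‖)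
    (σmin : ℝ)
    (hσ : σmin ∈ nonzeroSingularValues A ∧
      ∀ s ∈ nonzeroSingularValues A, σmin ≤ s)
    (x0 : EuclideanSpace ℝ (Fin n))
    (hx0 : x0 ∈ Submodule.span ℝ (Set.range A)) :
    ∀ k : ℕ,
      ∑ w : Fin k → Fin m,
        (∏ i, ‖A (w i)‖ ^ 2 / (∑ j, ‖A j‖ ^ 2)) * ‖kacRun A b x0 w - xhat‖ ^ 2
      ≤ (1 - σmin ^ 2 / (∑ j, ‖A j‖ ^ 2)) ^ k * ‖x0 - xhat‖ ^ 2 := fun k =>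
  kac_main A b xhat hxhat.1 (xhat_mem_span A b xhat hxhat) σmin hσ k x0 hx0
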